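/- Let A, Θ ⊆ 𝔽_q with |A|²·|Θ| > q². Then there exists θ ∈ Θ such that |A + θA| > q/2, where A + θA = {a + θb : a, b ∈ A}. -/

import Mathlib

open Finset

private lemma fiber_sq {α β : Type*} [DecidableEq α] [DecidableEq β] [Fintype β]
    (s : Finset α) (f : α → β) :
    ∑ x : β, (s.filter fun a => f a = x).card ^ 2
      = ((s ×ˢ s).filter fun pp => f pp.1 = f pp.2).card := by
  rw [Finset.card_eq_sum_card_fiberwise
    (f := fun pp : α × α => f pp.1) (t := Finset.univ) (fun _ _ => mem_univ _)]
  refine Finset.sum_congr rfl fun x _ => ?_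
  rw [sq, ← Finset.card_product]
  congr 1
  ext pp
  simp only [mem_filter, mem_product]
  constructor
  · rintro ⟨⟨h1, h4⟩, h2, h5⟩
    exact ⟨⟨⟨h1, h2⟩, h4.trans h5.symm⟩, h4⟩
  · rintro ⟨⟨⟨h1, h2⟩, h3⟩, h4⟩
    exact ⟨⟨h1, h4⟩, h2, h3.symm.trans h4⟩

private lemma fiber_sum {α β : Type*} [DecidableEq α] [DecidableEq β] [Fintype β]
    (s : Finset α) (f : α → β) :
    ∑ x : β, (s.filter fun a => f a = x).card = s.card :=
  (Finset.card_eq_sum_card_fiberwise (f := f) (t := Finset.univ) (fun _ _ => mem_univ _)).symm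

private lemma cs_univ {α β : Type*} [DecidableEq α] [DecidableEq β] [Fintype β]
    (s : Finset α) (f : α → β) :
    s.card ^ 2 ≤ Fintype.card β * ((s ×ˢ s).filter fun pp => f pp.1 = f pp.2).card := by
  rw [← fiber_sq s f, ← fiber_sum s f]
  calc (∑ x : β, (s.filter fun a => f a = x).card) ^ 2
      ≤ Finset.univ.card * ∑ x : β, (s.filter fun a => f a = x).card ^ 2 :=
        sq_sum_le_card_mul_sum_sq
    _ = Fintype.card β * ∑ x : β, (s.filter fun a => f a = x).card ^ 2 := by
        rw [Finset.card_univ]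

private lemma cs_image {α β : Type*} [DecidableEq α] [DecidableEq β] [Fintype β]
    (s : Finset α) (f : α → β) :
    s.card ^ 2 ≤ (s.image f).card * ((s ×ˢ s).filter fun pp => f pp.1 = f pp.2).card := by
  have hzero : ∀ x ∈ Finset.univ \ s.image f, (s.filter fun a => f a = x).card = 0 := by
    intro x hx
    rw [Finset.card_eq_zero, Finset.filter_eq_empty_iff]
    intro a ha hfa
    rw [Finset.mem_sdiff] at hx
    exact hx.2 (hfa ▸ Finset.mem_image_of_mem f ha)
  have hsum : ∑ x ∈ s.image f, (s.filter fun a => f a = x).card = s.card := by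
    rw [← fiber_sum s f]
    exact Finset.sum_subset (Finset.subset_univ _)
      (fun x hx hx' => hzero x (Finset.mem_sdiff.mpr ⟨hx, hx'⟩))
  calc s.card ^ 2 = (∑ x ∈ s.image f, (s.filter fun a => f a = x).card) ^ 2 := by rw [hsum]
    _ ≤ (s.image f).card * ∑ x ∈ s.image f, (s.filter fun a => f a = x).card ^ 2 :=
        sq_sum_le_card_mul_sum_sq
    _ ≤ (s.image f).card * ∑ x : β, (s.filter fun a => f a = x).card ^ 2 := by
        exact Nat.mul_le_mul_left _ (Finset.sum_le_sum_of_subset (Finset.subset_univ _))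
    _ = _ := by rw [fiber_sq s f]

set_option maxHeartbeats 1000000 in
theorem pinned_linear_combination
    {F : Type*} [Field F] [Fintype F] [DecidableEq F] (q : ℕ) (hq : Fintype.card F = q)
    (A Θ : Finset F) (h : A.card ^ 2 * Θ.card > q ^ 2) :
    ∃ θ ∈ Θ, (((A ×ˢ A).image (fun p : F × F => p.1 + θ * p.2)).card : ℝ)
      > (q : ℝ) / 2 := by
  classical
  subst hq
  set q := Fintype.card F with hqdef
  set s : Finset (F × F) := A ×ˢ A with hsdef
  set E : F → ℕ := fun θ =>
    ((s ×ˢ s).filter fun pp =>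
      (fun p : F × F => p.1 + θ * p.2) pp.1 = (fun p : F × F => p.1 + θ * p.2) pp.2).card
    with hEdef
  have hscard : s.card = A.card ^ 2 := by rw [hsdef, Finset.card_product, sq]
  have hApos : 0 < A.card := by
    rcases Nat.eq_zero_or_pos A.card with h0 | h0
    · rw [h0] at h; simp at h
    · exact h0
  have hΘpos : 0 < Θ.card := by
    rcases Nat.eq_zero_or_pos Θ.card with h0 | h0
    · rw [h0] at h; simp at h
    · exact h0
  have hΘle : Θ.card ≤ q := Finset.card_le_univ Θ
  -- per-θ Cauchy-Schwarz bounds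
  have hCSq : ∀ θ : F, (A.card ^ 2) ^ 2 ≤ q * E θ := by
    intro θ
    rw [← hscard]
    exact cs_univ s (fun p : F × F => p.1 + θ * p.2)
  have hCSS : ∀ θ : F,
      (A.card ^ 2) ^ 2 ≤ (s.image fun p : F × F => p.1 + θ * p.2).card * E θ := by
    intro θ
    rw [← hscard]
    exact cs_image s (fun p : F × F => p.1 + θ * p.2)
  -- total energy bound
  have hsumE : ∑ θ : F, E θ ≤ q * A.card ^ 2 + (A.card ^ 2) ^ 2 := by
    have hswap : ∑ θ : F, E θ
        = ∑ pp ∈ s ×ˢ s, (Finset.univ.filter fun θ : F =>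
            pp.1.1 + θ * pp.1.2 = pp.2.1 + θ * pp.2.2).card := by
      simp only [hEdef, Finset.card_filter]
      exact Finset.sum_comm
    rw [hswap]
    have hpt : ∀ pp ∈ s ×ˢ s,
        (Finset.univ.filter fun θ : F =>
          pp.1.1 + θ * pp.1.2 = pp.2.1 + θ * pp.2.2).card
          ≤ if pp.1 = pp.2 then q else 1 := by
      intro pp _
      by_cases hd : pp.1 = pp.2
      · rw [if_pos hd]
        exact (Finset.card_filter_le _ _).trans (le_of_eq (Finset.card_univ))
      · rw [if_neg hd]
        refine Finset.card_le_one.mpr ?_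
        intro θ₁ h1 θ₂ h2
        simp only [Finset.mem_filter, Finset.mem_univ, true_and] at h1 h2
        have hb : pp.1.2 ≠ pp.2.2 := by
          intro hb
          apply hd
          have ha : pp.1.1 = pp.2.1 := by
            rw [hb] at h1; exact add_right_cancel h1
          exact Prod.ext ha hb
        have key : θ₁ * (pp.1.2 - pp.2.2) = θ₂ * (pp.1.2 - pp.2.2) := by
          linear_combination h1 - h2
        exact mul_right_cancel₀ (sub_ne_zero.mpr hb) key
    calc ∑ pp ∈ s ×ˢ s, (Finset.univ.filter fun θ : F =>
            pp.1.1 + θ * pp.1.2 = pp.2.1 + θ * pp.2.2).card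
        ≤ ∑ pp ∈ s ×ˢ s, (if pp.1 = pp.2 then q else 1) := Finset.sum_le_sum hpt
      _ = ((s ×ˢ s).filter fun pp => pp.1 = pp.2).card * q
          + ((s ×ˢ s).filter fun pp => ¬ pp.1 = pp.2).card * 1 := by
          rw [Finset.sum_ite]
          simp [Finset.sum_const, smul_eq_mul]
      _ ≤ s.card * q + s.card ^ 2 := by
          have hdiag : ((s ×ˢ s).filter fun pp : (F × F) × (F × F) => pp.1 = pp.2)
              = s.image fun a => (a, a) := by
            ext pp
            simp only [Finset.mem_filter, Finset.mem_product, Finset.mem_image]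
            constructor
            · rintro ⟨⟨h1, h2⟩, h3⟩
              exact ⟨pp.1, h1, by rw [Prod.ext_iff]; exact ⟨rfl, h3⟩⟩
            · rintro ⟨a, ha, rfl⟩
              exact ⟨⟨ha, ha⟩, rfl⟩
          have h1 : ((s ×ˢ s).filter fun pp : (F × F) × (F × F) => pp.1 = pp.2).card
              = s.card := by
            rw [hdiag]
            exact Finset.card_image_of_injective _ (fun x y hxy => by
              simpa [Prod.ext_iff] using hxy)
          have h2 : ((s ×ˢ s).filter fun pp : (F × F) × (F × F) => ¬ pp.1 = pp.2).card
              ≤ s.card ^ 2 := by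
            calc _ ≤ (s ×ˢ s).card := Finset.card_filter_le _ _
              _ = s.card ^ 2 := by rw [Finset.card_product, sq]
          rw [h1, mul_one]
          exact Nat.add_le_add_left h2 _
      _ = q * A.card ^ 2 + (A.card ^ 2) ^ 2 := by rw [hscard, mul_comm]
  -- choose minimizing θ
  obtain ⟨θ0, hθ0Θ, hmin⟩ := Θ.exists_min_image E (Finset.card_pos.mp hΘpos)
  refine ⟨θ0, hθ0Θ, ?_⟩
  by_contra hcon
  push_neg at hcon
  -- key numeric facts in ℕ
  have hT : Θ.card * E θ0 ≤ ∑ θ ∈ Θ, E θ := by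
    calc Θ.card * E θ0 = ∑ _θ ∈ Θ, E θ0 := by rw [Finset.sum_const, smul_eq_mul]
      _ ≤ ∑ θ ∈ Θ, E θ := Finset.sum_le_sum hmin
  have hU : (q - Θ.card) * (A.card ^ 2) ^ 2 ≤ q * ∑ θ ∈ Θᶜ, E θ := by
    calc (q - Θ.card) * (A.card ^ 2) ^ 2
        = ∑ _θ ∈ Θᶜ, (A.card ^ 2) ^ 2 := by
          rw [Finset.sum_const, smul_eq_mul, Finset.card_compl]
      _ ≤ ∑ θ ∈ Θᶜ, q * E θ := Finset.sum_le_sum fun θ _ => hCSq θ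
      _ = q * ∑ θ ∈ Θᶜ, E θ := (Finset.mul_sum _ _ _).symm
  have hsplit : ∑ θ ∈ Θ, E θ + ∑ θ ∈ Θᶜ, E θ = ∑ θ : F, E θ :=
    Finset.sum_add_sum_compl Θ E
  -- cast to ℝ and derive contradiction
  set S : ℕ := (s.image fun p : F × F => p.1 + θ0 * p.2).card with hSdef
  have hS2 : 2 * (S : ℝ) ≤ (q : ℝ) := by linarith [hcon]
  have f1 : ((A.card : ℝ) ^ 2) ^ 2 ≤ (S : ℝ) * (E θ0 : ℝ) := by
    exact_mod_cast hCSS θ0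
  have f3 : ((∑ θ ∈ Θ, E θ : ℕ) : ℝ) + ((∑ θ ∈ Θᶜ, E θ : ℕ) : ℝ)
      ≤ (q : ℝ) * (A.card : ℝ) ^ 2 + ((A.card : ℝ) ^ 2) ^ 2 := by
    rw [← Nat.cast_add, hsplit]
    exact_mod_cast hsumE
  have f4 : (Θ.card : ℝ) * (E θ0 : ℝ) ≤ ((∑ θ ∈ Θ, E θ : ℕ) : ℝ) := by
    exact_mod_cast hT
  have f2 : ((q : ℝ) - (Θ.card : ℝ)) * ((A.card : ℝ) ^ 2) ^ 2
      ≤ (q : ℝ) * ((∑ θ ∈ Θᶜ, E θ : ℕ) : ℝ) := by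
    have := hU
    have hcast : (((q - Θ.card : ℕ)) : ℝ) = (q : ℝ) - (Θ.card : ℝ) :=
      Nat.cast_sub hΘle
    calc ((q : ℝ) - (Θ.card : ℝ)) * ((A.card : ℝ) ^ 2) ^ 2
        = (((q - Θ.card : ℕ)) : ℝ) * ((A.card : ℝ) ^ 2) ^ 2 := by rw [hcast]
      _ ≤ (q : ℝ) * ((∑ θ ∈ Θᶜ, E θ : ℕ) : ℝ) := by exact_mod_cast hU
  have f6 : (q : ℝ) ^ 2 < (A.card : ℝ) ^ 2 * (Θ.card : ℝ) := by exact_mod_cast h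
  have hqpos : (0 : ℝ) < (q : ℝ) := by
    have : 0 < q := Fintype.card_pos
    exact_mod_cast this
  have hApos' : (0 : ℝ) < (A.card : ℝ) := by exact_mod_cast hApos
  have hΘpos' : (0 : ℝ) < (Θ.card : ℝ) := by exact_mod_cast hΘpos
  have hE0 : (0 : ℝ) ≤ (E θ0 : ℝ) := Nat.cast_nonneg _
  have hSnn : (0 : ℝ) ≤ (S : ℝ) := Nat.cast_nonneg _
  -- q * (Θ.card * E θ0) ≤ q^2 * a + Θ.card * a^2, where a := A.card^2
  set a : ℝ := (A.card : ℝ) ^ 2 with hadef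
  have hapos : (0 : ℝ) < a := by positivity
  have step1 : (q : ℝ) * ((Θ.card : ℝ) * (E θ0 : ℝ)) ≤ (q : ℝ) ^ 2 * a + (Θ.card : ℝ) * a ^ 2 := by
    have h1 : (q : ℝ) * ((Θ.card : ℝ) * (E θ0 : ℝ)) ≤ (q : ℝ) * ((∑ θ ∈ Θ, E θ : ℕ) : ℝ) :=
      mul_le_mul_of_nonneg_left f4 (le_of_lt hqpos)
    have h2 : (q : ℝ) * ((∑ θ ∈ Θ, E θ : ℕ) : ℝ) + (q : ℝ) * ((∑ θ ∈ Θᶜ, E θ : ℕ) : ℝ)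
        ≤ (q : ℝ) * ((q : ℝ) * a + a ^ 2) := by
      rw [← mul_add]
      exact mul_le_mul_of_nonneg_left f3 (le_of_lt hqpos)
    nlinarith [f2]
  -- 2 * a^2 ≤ q * E θ0
  have step2 : 2 * a ^ 2 ≤ (q : ℝ) * (E θ0 : ℝ) := by
    have : 2 * ((S : ℝ) * (E θ0 : ℝ)) ≤ (q : ℝ) * (E θ0 : ℝ) := by
      nlinarith [hS2, hE0]
    nlinarith [f1]
  -- combine: Θ.card * a ≤ q^2, contradiction with f6
  have step3 : (Θ.card : ℝ) * a ^ 2 ≤ (q : ℝ) ^ 2 * a := by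
    nlinarith [step1, step2, hΘpos']
  have : (Θ.card : ℝ) * a ≤ (q : ℝ) ^ 2 := by
    have := mul_le_mul_of_nonneg_right step3 (le_of_lt (inv_pos.mpr hapos))
    calc (Θ.card : ℝ) * a = (Θ.card : ℝ) * a ^ 2 * a⁻¹ := by
          field_simp
      _ ≤ (q : ℝ) ^ 2 * a * a⁻¹ := this
      _ = (q : ℝ) ^ 2 := by field_simp
  nlinarith [f6, this]
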